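/- Let R be a commutative Noetherian ring, I and J ideals of R, M an R-module, and i a non-negative integer. Then Supp(H^i_{I,J}(M)) ⊆ ⋃_{a ∈ W̃(I,J)} Supp(H^i_a(M)), where the union is over all ideals a in W̃(I,J) and H^i_a denotes ordinary local cohomology with respect to a. -/

import Mathlib

open CategoryTheory

/-- The `(I,J)`-torsion submodule `Γ_{I,J}(M) = {x ∈ M : Iⁿ x ⊆ J x for n ≫ 1}`;
note that `Iⁿ x ⊆ J x` is equivalent to `Iⁿ ≤ J + ann_R(x)`. -/
def pairTorsion {R : Type} [CommRing R] (I J : Ideal R) (M : Type) [AddCommGroup M]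
    [Module R M] : Submodule R M where
  carrier := {x | ∃ n : ℕ, I ^ n ≤ J + Ideal.torsionOf R M x}
  zero_mem' := ⟨0, by simp [Ideal.torsionOf_zero]⟩
  add_mem' := by
    rintro x y ⟨n, hn⟩ ⟨m, hm⟩
    refine ⟨n + m, ?_⟩
    rw [pow_add]
    refine le_trans (Ideal.mul_mono hn hm) (Ideal.mul_le.mpr fun r hr s hs => ?_)
    rw [Submodule.add_eq_sup, Submodule.mem_sup] at hr hs ⊢
    obtain ⟨j1, hj1, a, ha, rfl⟩ := hr
    obtain ⟨j2, hj2, b, hb, rfl⟩ := hs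
    refine ⟨j1 * (j2 + b) + a * j2, ?_, a * b, ?_, by ring⟩
    · exact Ideal.add_mem _ (Ideal.mul_mem_right _ _ hj1) (Ideal.mul_mem_left _ _ hj2)
    · rw [Ideal.mem_torsionOf_iff] at ha hb ⊢
      have h1 : (a * b) • x = 0 := by rw [mul_comm, mul_smul, ha, smul_zero]
      have h2 : (a * b) • y = 0 := by rw [mul_smul, hb, smul_zero]
      rw [smul_add, h1, h2, add_zero]
  smul_mem' := by
    rintro c x ⟨n, hn⟩
    refine ⟨n, le_trans hn (sup_le_sup_left ?_ _)⟩
    intro r hr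
    rw [Ideal.mem_torsionOf_iff] at hr ⊢
    rw [smul_comm, hr, smul_zero]

/-- The `(I,J)`-torsion functor `Γ_{I,J}` on the category of `R`-modules. -/
def pairGamma {R : Type} [CommRing R] (I J : Ideal R) : ModuleCat R ⥤ ModuleCat R where
  obj M := ModuleCat.of R (pairTorsion I J M)
  map {M N} f := ModuleCat.ofHom (LinearMap.restrict f.hom (fun x (hx : x ∈ pairTorsion I J M) => by
    obtain ⟨n, hn⟩ := hx
    exact ⟨n, le_trans hn (sup_le_sup_left (fun r hr => by
      rw [Ideal.mem_torsionOf_iff] at hr ⊢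
      rw [← map_smul, hr, map_zero]) _)⟩))
  map_id _ := ModuleCat.hom_ext (LinearMap.ext fun _ => Subtype.ext rfl)
  map_comp _ _ := ModuleCat.hom_ext (LinearMap.ext fun _ => Subtype.ext rfl)

instance {R : Type} [CommRing R] (I J : Ideal R) : (pairGamma I J).Additive where
  map_add := ModuleCat.hom_ext (LinearMap.ext fun _ => Subtype.ext rfl)

/-- The local cohomology functor `H^i_{I,J}` with respect to the pair of ideals `(I,J)`:
the `i`-th right derived functor of `Γ_{I,J}`.  Ordinary local cohomology `H^i_I` is the
case `J = ⊥`. -/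
noncomputable def pairLocalCohomology {R : Type} [CommRing R] (I J : Ideal R) (i : ℕ) :
    ModuleCat R ⥤ ModuleCat R :=
  (pairGamma I J).rightDerived i

/-- The cohomological dimension `cd(I,J,M) = sup{i : H^i_{I,J}(M) ≠ 0}` (with `sup ∅ = ⊥`). -/
noncomputable def pairCohomologicalDim {R : Type} [CommRing R] (I J : Ideal R)
    (M : ModuleCat R) : WithBot ℕ∞ :=
  sSup {d : WithBot ℕ∞ | ∃ i : ℕ, d = (i : ℕ∞) ∧ Nontrivial ((pairLocalCohomology I J i).obj M)}

/-- The set of attached prime ideals of an `R`-module `M`: a prime `p` is attached to `M`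
if `p = Ann_R(M/N)` for some submodule `N` of `M`. -/
def attachedPrimes (R M : Type) [CommRing R] [AddCommGroup M] [Module R M] : Set (Ideal R) :=
  {p | p.IsPrime ∧ ∃ N : Submodule R M, p = Module.annihilator R (M ⧸ N)}

/-- A module is secondary if it is nonzero and every `r : R` acts on it either surjectively
or nilpotently. -/
def IsSecondary (R M : Type) [CommRing R] [AddCommGroup M] [Module R M] : Prop :=
  Nontrivial M ∧ ∀ r : R, Function.Surjective (fun m : M => r • m) ∨ ∃ n : ℕ, ∀ m : M, r ^ n • m = 0

/-- A module is representable if it admits a secondary representation, i.e. it is a finite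
sum of secondary submodules. -/
def IsRepresentable (R M : Type) [CommRing R] [AddCommGroup M] [Module R M] : Prop :=
  ∃ s : Finset (Submodule R M), (∀ N ∈ s, IsSecondary R N) ∧ s.sup id = ⊤

/-- The (Krull) dimension of a module, `dim M = dim (R / Ann_R M)`. -/
noncomputable def moduleDim (R M : Type) [CommRing R] [AddCommGroup M] [Module R M] :
    WithBot ℕ∞ :=
  ringKrullDim (R ⧸ Module.annihilator R M)

/-- A submodule is essential if it meets every nonzero submodule nontrivially. -/
def IsEssentialSubmodule {R E : Type} [CommRing R] [AddCommGroup E] [Module R E]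
    (N : Submodule R E) : Prop :=
  ∀ P : Submodule R E, P ≠ ⊥ → N ⊓ P ≠ ⊥

/-- `E` is an injective hull of `K` over `R`: `E` is an injective `R`-module containing a
copy of `K` as an essential submodule.  The Matlis dual of an `R`-module `X` (for local `R`
with residue field `K`) is then `D_R(X) = Hom_R(X, E)`. -/
def IsInjectiveHullOf (R K E : Type) [CommRing R] [AddCommGroup K] [Module R K]
    [AddCommGroup E] [Module R E] : Prop :=
  Module.Injective R E ∧
    ∃ f : K →ₗ[R] E, Function.Injective f ∧ IsEssentialSubmodule (LinearMap.range f)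

/-- `W(I,J)`: the set of prime ideals `p` with `Iⁿ ⊆ p + J` for some `n ≥ 1`. -/
def pairW {R : Type} [CommRing R] (I J : Ideal R) : Set (Ideal R) :=
  {p | p.IsPrime ∧ ∃ n : ℕ, 1 ≤ n ∧ I ^ n ≤ p + J}

/-- `W̃(I,J)`: the set of ideals `a` with `Iⁿ ⊆ a + J` for some `n ≥ 1`. -/
def pairWtilde {R : Type} [CommRing R] (I J : Ideal R) : Set (Ideal R) :=
  {a | ∃ n : ℕ, 1 ≤ n ∧ I ^ n ≤ a + J}

section AuxProof

open CategoryTheory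

variable {R : Type} [CommRing R]

lemma sup_pow_le_aux (a J : Ideal R) (m : ℕ) : (a + J) ^ m ≤ a ^ m + J := by
  induction m with
  | zero => simp [Ideal.one_eq_top]
  | succ m ih =>
    rw [pow_succ, pow_succ]
    calc (a + J) ^ m * (a + J) ≤ (a ^ m + J) * (a + J) := Ideal.mul_mono_left ih
      _ = a ^ m * a + (a ^ m * J + (J * a + J * J)) := by ring
      _ ≤ a ^ m * a + J := by
          rw [Submodule.add_eq_sup, Submodule.add_eq_sup (M := R)]
          refine sup_le_sup_left ?_ _
          exact sup_le Ideal.mul_le_right (sup_le Ideal.mul_le_left Ideal.mul_le_right)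

lemma pairTorsion_mono {I J a : Ideal R} (h : ∃ n : ℕ, I ^ n ≤ a + J)
    (M : Type) [AddCommGroup M] [Module R M] :
    pairTorsion a ⊥ M ≤ pairTorsion I J M := by
  rintro x ⟨m, hm⟩
  obtain ⟨n, hn⟩ := h
  refine ⟨n * m, ?_⟩
  calc I ^ (n * m) = (I ^ n) ^ m := pow_mul I n m
    _ ≤ (a + J) ^ m := Ideal.pow_right_mono hn m
    _ ≤ a ^ m + J := sup_pow_le_aux a J m
    _ ≤ (⊥ + Ideal.torsionOf R M x) + J := by
        rw [Submodule.add_eq_sup, Submodule.add_eq_sup (p := (⊥ : Ideal R) + _)]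
        exact sup_le_sup_right hm _
    _ = J + Ideal.torsionOf R M x := by
        rw [Submodule.add_eq_sup, Submodule.add_eq_sup, Submodule.add_eq_sup,
          bot_sup_eq, sup_comm]

/-- the inclusion `Γ_a ⟶ Γ_{I,J}` for `a` with `Iⁿ ≤ a + J`. -/
def gammaIncl (I J a : Ideal R) (h : ∃ n : ℕ, I ^ n ≤ a + J) :
    pairGamma a ⊥ ⟶ pairGamma I J where
  app M := ModuleCat.ofHom (Submodule.inclusion (pairTorsion_mono h M))
  naturality X Y f := by
    ext x
    rfl

end AuxProof

open CategoryTheory HomologicalComplex in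
lemma exists_range_gammaIncl {R : Type} [CommRing R] (I J : Ideal R) (M : ModuleCat R) (i : ℕ)
    (x : (pairLocalCohomology I J i).obj M) :
    ∃ a, ∃ _ : a ∈ pairWtilde I J, ∃ h : ∃ n : ℕ, I ^ n ≤ a + J,
      x ∈ Set.range ((NatTrans.rightDerived (gammaIncl I J a h) i).app M) := by
  classical
  let P : InjectiveResolution M := InjectiveResolution.of M
  let E := P.cocomplex
  let K := ((pairGamma I J).mapHomologicalComplex (ComplexShape.up ℕ)).obj E
  let e := P.isoRightDerivedObj (pairGamma I J) i
  obtain ⟨z', hz'⟩ := (ModuleCat.epi_iff_surjective (K.homologyπ i)).1 inferInstance (e.hom x)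
  let z : pairTorsion I J (E.X i) := (K.iCycles i).hom z'
  have hdz : E.d i (i+1) z.1 = 0 := by
    have h0 : K.d i (i+1) (K.iCycles i z') = 0 := by
      have h1 := ConcreteCategory.congr_hom (K.iCycles_d i (i+1)) z'
      exact h1
    exact congrArg (fun t : pairTorsion I J (E.X (i+1)) => (t : E.X (i+1))) h0
  let a := Ideal.torsionOf R (E.X i) z.1
  obtain ⟨n, hn⟩ := z.2
  have ha : a ∈ pairWtilde I J := by
    refine ⟨max n 1, le_max_right _ _, ?_⟩
    calc I ^ max n 1 ≤ I ^ n := Ideal.pow_le_pow_right (le_max_left n 1)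
      _ ≤ J + a := hn
      _ = a + J := add_comm _ _
  have h' : ∃ n : ℕ, I ^ n ≤ a + J := ⟨n, by rw [add_comm]; exact hn⟩
  refine ⟨a, ha, h', ?_⟩
  let Ka := ((pairGamma a ⊥).mapHomologicalComplex (ComplexShape.up ℕ)).obj E
  have hwmem : z.1 ∈ pairTorsion a ⊥ (E.X i) :=
    ⟨1, by rw [pow_one, Submodule.add_eq_sup, bot_sup_eq]⟩
  let w : Ka.X i := (⟨z.1, hwmem⟩ : pairTorsion a ⊥ (E.X i))
  have hdw : Ka.d i (i+1) w = 0 := @Subtype.ext _ _ (Ka.d i (i+1) w) 0 hdz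
  have hnext : (ComplexShape.up ℕ).next i = i + 1 := (ComplexShape.up ℕ).next_eq' rfl
  let w' : Ka.cycles i := Ka.cyclesMk w (i+1) hnext hdw
  have hw'i : Ka.iCycles i w' = w := Ka.i_cyclesMk w (i+1) hnext hdw
  let ea := P.isoRightDerivedObj (pairGamma a ⊥) i
  let φ := (NatTrans.mapHomologicalComplex (gammaIncl I J a h') (ComplexShape.up ℕ)).app E
  refine ⟨ea.inv (Ka.homologyπ i w'), ?_⟩
  rw [InjectiveResolution.rightDerived_app_eq (gammaIncl I J a h') P i]
  show e.inv ((homologyFunctor _ _ i).map φ (ea.hom (ea.inv (Ka.homologyπ i w')))) = x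
  have cancel : ∀ t, ea.hom (ea.inv t) = t := fun t => by
    change (ea.inv ≫ ea.hom) t = t
    rw [ea.inv_hom_id]; rfl
  erw [cancel]
  have hπ : (homologyFunctor _ _ i).map φ (Ka.homologyπ i w') =
      K.homologyπ i (cyclesMap φ i w') := by
    change (Ka.homologyπ i ≫ homologyMap φ i) w' = (cyclesMap φ i ≫ K.homologyπ i) w'
    rw [homologyπ_naturality]
  rw [hπ]
  have hcy : cyclesMap φ i w' = z' := by
    apply (ModuleCat.mono_iff_injective (K.iCycles i)).1 inferInstance
    have h1 := ConcreteCategory.congr_hom (cyclesMap_i φ i) w'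
    show (cyclesMap φ i ≫ K.iCycles i) w' = K.iCycles i z'
    rw [h1]
    show φ.f i (Ka.iCycles i w') = K.iCycles i z'
    rw [hw'i]
    exact Subtype.ext rfl
  rw [hcy, hz']
  change (e.hom ≫ e.inv) x = x
  rw [e.hom_inv_id]; rfl

/-- **Lemma 6(i).** For any `R`-module `M` and `i ≥ 0`,
`Supp(H^i_{I,J}(M)) ⊆ ⋃_{a ∈ W̃(I,J)} Supp(H^i_a(M))`, where `H^i_a` is ordinary local
cohomology (the case `J = ⊥`). -/
theorem supp_pair_local_cohomology_subset_iUnion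
    (R : Type) [CommRing R] [IsNoetherianRing R] (I J : Ideal R)
    (M : Type) [AddCommGroup M] [Module R M] (i : ℕ) :
    Module.support R ((pairLocalCohomology I J i).obj (ModuleCat.of R M)) ⊆
      ⋃ a ∈ pairWtilde I J,
        Module.support R ((pairLocalCohomology a ⊥ i).obj (ModuleCat.of R M)) := by
  intro p hp
  rw [Module.mem_support_iff_exists_annihilator] at hp
  obtain ⟨m, hm⟩ := hp
  obtain ⟨a, ha, h', y, hy⟩ := exists_range_gammaIncl I J (ModuleCat.of R M) i m
  refine Set.mem_iUnion₂.2 ⟨a, ha, ?_⟩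
  rw [Module.mem_support_iff_exists_annihilator]
  refine ⟨y, fun r hr => hm ?_⟩
  simp only [Submodule.mem_annihilator_span_singleton] at hr ⊢
  rw [← hy]
  have hs := map_smul ((NatTrans.rightDerived (gammaIncl I J a h') i).app (ModuleCat.of R M)).hom r y
  erw [← hs, (Submodule.mem_annihilator_span_singleton y r).1 hr, map_zero]
  rfl
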